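/- For non-integer $k \in \frac{1}{2}\mathbb{Z}$ and $y > 0$: $y^{-k/2} M_{k/2, (1-k)/2}(y) = (-1)^{k-1}(1-k) e^{-y/2}\left(\Gamma(1-k) - \Gamma(1-k, -y)\right)$, where $(-1)^{k-1} = e^{\pi i(k-1)}$ via the principal branch, $M_{\mu,\nu}$ is the Whittaker M-function, $\Gamma$ is the gamma function, and $\Gamma(1-k,-y)$ is the incomplete gamma function continued to negative real argument. -/
import Mathlib


open Complex

/-- The Pochhammer symbol `(a)_n = a(a+1)⋯(a+n-1)`. -/
noncomputable def poch (a : ℝ) (n : ℕ) : ℝ := ∏ i ∈ Finset.range n, (a + i)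

/-- Kummer's confluent hypergeometric function
`₁F₁(a; b; y) = ∑_{n≥0} (a)_n/(b)_n · yⁿ/n!`. -/
noncomputable def kummerM (a b y : ℝ) : ℝ :=
  ∑' n : ℕ, (poch a n / poch b n) * y ^ n / (n.factorial : ℝ)

/-- The Whittaker M-function
`M_{μ,ν}(y) = e^{-y/2} y^{ν+1/2} ₁F₁(ν-μ+1/2; 1+2ν; y)`. -/
noncomputable def whittakerM (μ ν y : ℝ) : ℝ :=
  Real.exp (-y / 2) * y ^ (ν + 1 / 2 : ℝ) * kummerM (ν - μ + 1 / 2) (1 + 2 * ν) y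

/-- The lower incomplete gamma function
`γ(s, w) = w^s ∑_{n≥0} (-w)^n / (n! (s+n))`, for complex `w`
(with `w^s` via the principal branch). -/
noncomputable def lowerGammaC (s : ℝ) (w : ℂ) : ℂ :=
  w ^ (s : ℂ) * ∑' n : ℕ, (-w) ^ n / ((n.factorial : ℂ) * ((s : ℂ) + n))

/-- The upper incomplete gamma function continued to negative real argument:
`Γ(s, -y) = Γ(s) - γ(s, -y)`. -/
noncomputable def incGammaNeg (s y : ℝ) : ℂ :=
  (Real.Gamma s : ℂ) - lowerGammaC s (-(y : ℂ))

lemma poch_mul (s : ℝ) (n : ℕ) : poch s n * (s + n) = s * poch (s + 1) n := by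
  induction n with
  | zero => simp [poch]
  | succ n ih =>
    have h1 : poch s (n + 1) = poch s n * (s + n) := Finset.prod_range_succ _ n
    have h2 : poch (s + 1) (n + 1) = poch (s + 1) n * (s + 1 + n) :=
      Finset.prod_range_succ _ n
    rw [h1, h2]
    push_cast
    linear_combination (s + 1 + n) * ih

lemma poch_ne_zero (s : ℝ) (hs : ∀ n : ℕ, s + n ≠ 0) (n : ℕ) : poch (s + 1) n ≠ 0 := by
  apply Finset.prod_ne_zero_iff.2
  intro i _
  have := hs (i + 1)
  push_cast at this ⊢
  intro h; apply this; linarith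

/-- For non-integral half-integers `k` and `y > 0`:
`y^{-k/2} M_{k/2,(1-k)/2}(y) = (-1)^{k-1}(1-k) e^{-y/2} (Γ(1-k) - Γ(1-k,-y))`,
with `(-1)^{k-1} = e^{πi(k-1)}` via the principal branch. -/
theorem whittakerM_second_special_value (k : ℝ)
    (hk : ∃ j : ℤ, Odd j ∧ k = (j : ℝ) / 2) (y : ℝ) (hy : 0 < y) :
    ((y ^ (-(k / 2) : ℝ) * whittakerM (k / 2) ((1 - k) / 2) y : ℝ) : ℂ) =
      (-1 : ℂ) ^ ((k : ℂ) - 1) * ((1 - k : ℝ) : ℂ) *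
        (Real.exp (-y / 2) : ℂ) *
        ((Real.Gamma (1 - k) : ℂ) - incGammaNeg (1 - k) y) := by
  obtain ⟨j, hj, rfl⟩ := hk
  set k : ℝ := (j : ℝ) / 2 with hkdef
  set s : ℝ := 1 - k with hsdef
  -- s + n ≠ 0 for all naturals n
  have hs : ∀ n : ℕ, s + n ≠ 0 := by
    intro n h
    have : (j : ℝ) = 2 + 2 * n := by
      rw [hsdef, hkdef] at h; field_simp at h; linarith
    have hz : j = 2 + 2 * (n : ℤ) := by exact_mod_cast this
    exact (Int.not_even_iff_odd.mpr hj) ⟨1 + n, by omega⟩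
  -- step 1: rewrite the Whittaker function
  have harg1 : (1 - k) / 2 - k / 2 + 1 / 2 = s := by rw [hsdef]; ring
  have harg2 : 1 + 2 * ((1 - k) / 2) = s + 1 := by rw [hsdef]; ring
  have harg3 : (1 - k) / 2 + 1 / 2 = 1 - k / 2 := by ring
  have hpow : y ^ (-(k / 2) : ℝ) * y ^ (1 - k / 2 : ℝ) = y ^ (s : ℝ) := by
    rw [← Real.rpow_add hy]; congr 1; rw [hsdef]; ring
  have hkum : kummerM s (s + 1) y = ∑' n : ℕ, s * (y ^ n / (n.factorial * (s + n))) := by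
    unfold kummerM
    apply tsum_congr
    intro n
    have h1 : poch s n / poch (s + 1) n = s / (s + n) := by
      rw [div_eq_div_iff (poch_ne_zero s hs n) (hs n), poch_mul]
    rw [h1, div_mul_eq_mul_div, div_div]
    rw [mul_comm ((s : ℝ) + n) (n.factorial : ℝ), mul_div_assoc]
  have hLHS : y ^ (-(k / 2) : ℝ) * whittakerM (k / 2) ((1 - k) / 2) y =
      Real.exp (-y / 2) * (y ^ (s : ℝ) *
        ∑' n : ℕ, s * (y ^ n / (n.factorial * (s + n)))) := by
    calc y ^ (-(k / 2) : ℝ) * whittakerM (k / 2) ((1 - k) / 2) y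
        = Real.exp (-y / 2) * (y ^ (-(k / 2) : ℝ) * y ^ (1 - k / 2 : ℝ)) *
            kummerM s (s + 1) y := by
          unfold whittakerM; rw [harg1, harg2, harg3]; ring
      _ = _ := by rw [hpow, hkum]; ring
  -- step 2: rewrite the RHS
  have hinc : (Real.Gamma s : ℂ) - incGammaNeg s y = lowerGammaC s (-(y : ℂ)) := by
    unfold incGammaNeg; ring
  have hcpow : (-(y : ℂ)) ^ (s : ℂ) =
      ((y ^ (s : ℝ) : ℝ) : ℂ) * Complex.exp (Real.pi * I * s) := by
    have h1 : ((-y : ℝ) : ℂ) ^ (s : ℂ) = ((y : ℝ) : ℂ) ^ (s : ℂ) *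
        Complex.exp (Real.pi * I * s) := by
      have := Complex.ofReal_cpow_of_nonpos (x := -y) (by linarith) (s : ℂ)
      simpa using this
    rw [show (-(y : ℂ)) = ((-y : ℝ) : ℂ) by push_cast; ring, h1,
      ← Complex.ofReal_cpow hy.le]
  have hlower : lowerGammaC s (-(y : ℂ)) =
      ((y ^ (s : ℝ) : ℝ) : ℂ) * Complex.exp (Real.pi * I * s) *
        ∑' n : ℕ, (y : ℂ) ^ n / ((n.factorial : ℂ) * ((s : ℂ) + n)) := by
    unfold lowerGammaC
    rw [hcpow]
    congr 1
    apply tsum_congr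
    intro n
    rw [neg_neg]
  have hneg1 : (-1 : ℂ) ^ ((k : ℂ) - 1) = Complex.exp (Complex.log (-1) * ((k : ℂ) - 1)) := by
    rw [Complex.cpow_def_of_ne_zero (by norm_num)]
  have hexp : (-1 : ℂ) ^ ((k : ℂ) - 1) * Complex.exp (Real.pi * I * s) = 1 := by
    have hsc : ((s : ℝ) : ℂ) = 1 - (k : ℂ) := by rw [hsdef]; push_cast; ring
    have harg : (Real.pi : ℂ) * I * ((k : ℂ) - 1) + Real.pi * I * (s : ℂ) = 0 := by
      rw [hsc]; ring
    rw [hneg1, Complex.log_neg_one, ← Complex.exp_add, harg, Complex.exp_zero]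
  -- put everything together
  rw [hLHS, hinc, hlower]
  rw [Complex.ofReal_mul, Complex.ofReal_mul, Complex.ofReal_tsum]
  have hterm : ∀ n : ℕ, ((s * (y ^ n / (n.factorial * (s + n))) : ℝ) : ℂ)
      = (s : ℂ) * ((y : ℂ) ^ n / ((n.factorial : ℂ) * ((s : ℂ) + n))) := by
    intro n; push_cast; ring
  rw [tsum_congr hterm, tsum_mul_left]
  linear_combination (-(s : ℂ) * (Real.exp (-y / 2) : ℂ) * ((y ^ (s : ℝ) : ℝ) : ℂ) *
      ∑' n : ℕ, (y : ℂ) ^ n / ((n.factorial : ℂ) * ((s : ℂ) + n))) * hexp
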